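/- Let h : ℝ × ℝ → [0,∞) be measurable, even in each variable (h(−x,y) = h(x,y) = h(x,−y)), and monotone in the sense that h(x,y) ≤ h(x',y') whenever |x| ≤ |x'| and |y| ≤ |y'|. Let A, B ⊆ ℝ be measurable sets of finite Lebesgue measure, and let A* and B* be the open intervals centred at 0 with the same Lebesgue measures as A and B respectively. Then ∬_{A×B} h(x,y) dx dy ≥ ∬_{A*×B*} h(x,y) dx dy, both integrals taking values in [0,∞]. -/

import Mathlib

open MeasureTheory ENNReal

lemma key_1d (f : ℝ → ℝ≥0∞) (hmono : ∀ y z : ℝ, |y| ≤ |z| → f y ≤ f z)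
    (B : Set ℝ) (hB : MeasurableSet B) (hBfin : volume B < ⊤) (b : ℝ) (hb : 0 ≤ b)
    (hvol : volume (Set.Ioo (-b) b) = volume B) :
    ∫⁻ y in Set.Ioo (-b) b, f y ≤ ∫⁻ y in B, f y := by
  set I := Set.Ioo (-b) b with hI
  have hImeas : MeasurableSet I := measurableSet_Ioo
  have hIfin : volume I < ⊤ := hvol ▸ hBfin
  -- volumes of the two difference pieces agree
  have hinterfin : volume (I ∩ B) ≠ ⊤ :=
    (lt_of_le_of_lt (measure_mono Set.inter_subset_left) hIfin).ne
  have hvI : volume (I ∩ B) + volume (I \ B) = volume I := measure_inter_add_diff I hB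
  have hvB : volume (B ∩ I) + volume (B \ I) = volume B := measure_inter_add_diff B hImeas
  have hdiff : volume (I \ B) = volume (B \ I) := by
    have : volume (I ∩ B) + volume (I \ B) = volume (I ∩ B) + volume (B \ I) := by
      rw [hvI, hvol, ← hvB, Set.inter_comm]
    exact (ENNReal.add_right_inj hinterfin).mp this
  -- split the integrals
  have hdisj1 : Disjoint (I ∩ B) (I \ B) :=
    Set.disjoint_sdiff_right.mono_left Set.inter_subset_right
  have hdisj2 : Disjoint (B ∩ I) (B \ I) :=
    Set.disjoint_sdiff_right.mono_left Set.inter_subset_right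
  have hsplitI : ∫⁻ y in I, f y = (∫⁻ y in I ∩ B, f y) + ∫⁻ y in I \ B, f y := by
    have h1 := lintegral_union (μ := volume) (f := f) (hImeas.diff hB) hdisj1
    rwa [Set.inter_union_diff] at h1
  have hsplitB : ∫⁻ y in B, f y = (∫⁻ y in I ∩ B, f y) + ∫⁻ y in B \ I, f y := by
    have h2 := lintegral_union (μ := volume) (f := f) (hB.diff hImeas) hdisj2
    rw [Set.inter_union_diff] at h2
    rw [h2, Set.inter_comm]
  rw [hsplitI, hsplitB]
  refine add_le_add le_rfl ?_
  -- bound on I \ B by the constant f b, and below on B \ I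
  calc ∫⁻ y in I \ B, f y ≤ ∫⁻ _ in I \ B, f b := by
        refine setLIntegral_mono' (hImeas.diff hB) fun y hy => hmono _ _ ?_
        rw [abs_of_nonneg hb]
        exact (abs_lt.mpr ⟨hy.1.1, hy.1.2⟩).le
    _ = f b * volume (B \ I) := by rw [setLIntegral_const, hdiff]
    _ = ∫⁻ _ in B \ I, f b := (setLIntegral_const _ _).symm
    _ ≤ ∫⁻ y in B \ I, f y := by
        refine setLIntegral_mono' (hB.diff hImeas) fun y hy => hmono _ _ ?_
        rw [abs_of_nonneg hb]
        have hni : ¬ (-b < y ∧ y < b) := fun hc => hy.2 (Set.mem_Ioo.mpr hc)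
        rcases not_and_or.mp hni with h1 | h2
        · push_neg at h1
          calc b ≤ -y := by linarith
            _ ≤ |y| := neg_le_abs y
        · push_neg at h2
          exact h2.trans (le_abs_self y)

theorem stmt_13 (h : ℝ × ℝ → ℝ) (hmeas : Measurable h) (hnonneg : ∀ p, 0 ≤ h p)
    (hevenx : ∀ x y : ℝ, h (-x, y) = h (x, y))
    (heveny : ∀ x y : ℝ, h (x, -y) = h (x, y))
    (hmono : ∀ x y x' y' : ℝ, |x| ≤ |x'| → |y| ≤ |y'| → h (x, y) ≤ h (x', y'))
    (A B : Set ℝ) (hA : MeasurableSet A) (hB : MeasurableSet B)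
    (hAfin : volume A < ⊤) (hBfin : volume B < ⊤)
    (a b : ℝ) (ha : 0 ≤ a) (hb : 0 ≤ b)
    (hvolA : volume (Set.Ioo (-a) a) = volume A)
    (hvolB : volume (Set.Ioo (-b) b) = volume B) :
    (∫⁻ x in Set.Ioo (-a) a, ∫⁻ y in Set.Ioo (-b) b, ENNReal.ofReal (h (x, y))) ≤
      ∫⁻ x in A, ∫⁻ y in B, ENNReal.ofReal (h (x, y)) := by
  have step1 : ∀ x : ℝ, (∫⁻ y in Set.Ioo (-b) b, ENNReal.ofReal (h (x, y))) ≤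
      ∫⁻ y in B, ENNReal.ofReal (h (x, y)) := fun x =>
    key_1d _ (fun y z hyz => ENNReal.ofReal_le_ofReal (hmono x y x z le_rfl hyz))
      B hB hBfin b hb hvolB
  calc (∫⁻ x in Set.Ioo (-a) a, ∫⁻ y in Set.Ioo (-b) b, ENNReal.ofReal (h (x, y)))
      ≤ ∫⁻ x in Set.Ioo (-a) a, ∫⁻ y in B, ENNReal.ofReal (h (x, y)) :=
        lintegral_mono fun x => step1 x
    _ ≤ ∫⁻ x in A, ∫⁻ y in B, ENNReal.ofReal (h (x, y)) := by
        refine key_1d _ (fun x x' hxx' => ?_) A hA hAfin a ha hvolA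
        exact lintegral_mono fun y => ENNReal.ofReal_le_ofReal (hmono x y x' y hxx' le_rfl)
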